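/- arXiv:2309.12921 — 2 statements merged into one kernel-verified Lean document; each statement's English description precedes it below -/
import Mathlib

section
/- Let (X,d) be a c₀-roughly geodesic δ-hyperbolic metric space. There exists C ≥ 0 (depending only on δ and c₀) such that for every x ∈ X and every Cauchy–Gromov sequence (xₙ) in X there is a map γ : [0,∞) → X with γ(0) = x, with |d(γ(s),γ(t)) − |s−t|| ≤ C for all s,t ≥ 0, and with lim_{t→∞} liminf_{n→∞} (γ(t),xₙ)_x = ∞. -/
open Filter

/-- The Gromov product `(x,y)_o` in a metric space. -/
noncomputable def gromovProd {X : Type*} [MetricSpace X] (o x y : X) : ℝ :=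
  (dist o x + dist o y - dist x y) / 2

/-- `X` is `δ`-hyperbolic. -/
def HyperbolicWith (X : Type*) [MetricSpace X] (δ : ℝ) : Prop :=
  ∀ w x y z : X, min (gromovProd w x y) (gromovProd w y z) - δ ≤ gromovProd w x z

/-- `X` is `C`-roughly geodesic. -/
def RoughlyGeodesicWith (X : Type*) [MetricSpace X] (C : ℝ) : Prop :=
  ∀ x y : X, ∃ a b : ℝ, a ≤ b ∧ ∃ γ : ℝ → X, γ a = x ∧ γ b = y ∧
    ∀ s ∈ Set.Icc a b, ∀ t ∈ Set.Icc a b, abs (dist (γ s) (γ t) - |s - t|) ≤ C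

/-- A sequence is Cauchy–Gromov if the Gromov products `(xₙ, xₘ)_o` tend to
infinity as `n, m → ∞`. -/
def CauchyGromov {X : Type*} [MetricSpace X] (o : X) (x : ℕ → X) : Prop :=
  ∀ M : ℝ, ∃ N : ℕ, ∀ m ≥ N, ∀ n ≥ N, M ≤ gromovProd o (x m) (x n)

/-- In a roughly geodesic hyperbolic space, every point and every boundary point
(represented by a Cauchy–Gromov sequence) are joined by a rough geodesic ray with
uniform constant. -/
theorem exists_roughRay_to_boundary
    {X : Type*} [MetricSpace X] (δ c₀ : ℝ) (hδ : 0 ≤ δ) (hc₀ : 0 ≤ c₀)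
    (hXhyp : HyperbolicWith X δ) (hXrg : RoughlyGeodesicWith X c₀) :
    ∃ C ≥ (0:ℝ), ∀ x : X, ∀ xs : ℕ → X, CauchyGromov x xs →
      ∃ γ : ℝ → X, γ 0 = x ∧
        (∀ s t : ℝ, 0 ≤ s → 0 ≤ t → abs (dist (γ s) (γ t) - |s - t|) ≤ C) ∧
        (∀ M : ℝ, ∃ T : ℝ, ∀ t ≥ T,
          M ≤ liminf (fun n => gromovProd x (γ t) (xs n)) atTop) := by
  refine ⟨5 * c₀ + 4 * δ + 2, by linarith, ?_⟩
  intro x xs hCG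
  -- choose thresholds N k so that Gromov products are ≥ k + 1 + c₀ beyond N k
  choose N hN using fun k : ℕ => hCG ((k : ℝ) + 1 + c₀)
  -- choose rough geodesics from x to xs (N k)
  choose a b hab γg hγ0 hγ1 hγd using fun k : ℕ => hXrg x (xs (N k))
  -- gromovProd to itself is the distance
  have hgself : ∀ k : ℕ, gromovProd x (xs (N k)) (xs (N k)) = dist x (xs (N k)) := by
    intro k; simp [gromovProd]
  have hdist : ∀ k : ℕ, (k : ℝ) + 1 + c₀ ≤ dist x (xs (N k)) := by
    intro k
    have := hN k (N k) le_rfl (N k) le_rfl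
    rwa [hgself k] at this
  -- endpoints estimate
  have hd3 : ∀ k : ℕ, |dist x (xs (N k)) - (b k - a k)| ≤ c₀ := by
    intro k
    have h := hγd k (a k) ⟨le_rfl, hab k⟩ (b k) ⟨hab k, le_rfl⟩
    rw [hγ0 k, hγ1 k] at h
    have habs : |a k - b k| = b k - a k := by
      rw [abs_sub_comm]; exact abs_of_nonneg (by linarith [hab k])
    rwa [habs] at h
  have hba : ∀ k : ℕ, (k : ℝ) + 1 ≤ b k - a k := by
    intro k
    have h := hd3 k
    rw [abs_le] at h
    have := hdist k
    linarith [h.1, h.2]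
  have hmem : ∀ k : ℕ, a k + (k : ℝ) ∈ Set.Icc (a k) (b k) := by
    intro k
    constructor
    · linarith [Nat.cast_nonneg (α := ℝ) k]
    · linarith [hba k]
  set y : ℕ → X := fun k => γg k (a k + (k : ℝ)) with hy
  have hd1 : ∀ k : ℕ, |dist x (y k) - (k : ℝ)| ≤ c₀ := by
    intro k
    have h := hγd k (a k) ⟨le_rfl, hab k⟩ (a k + (k : ℝ)) (hmem k)
    rw [hγ0 k] at h
    have habs : |a k - (a k + (k : ℝ))| = (k : ℝ) := by
      rw [show a k - (a k + (k : ℝ)) = -(k : ℝ) by ring, abs_neg]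
      exact abs_of_nonneg (Nat.cast_nonneg k)
    rwa [habs] at h
  have hd2 : ∀ k : ℕ, |dist (y k) (xs (N k)) - (b k - a k - (k : ℝ))| ≤ c₀ := by
    intro k
    have h := hγd k (a k + (k : ℝ)) (hmem k) (b k) ⟨hab k, le_rfl⟩
    rw [hγ1 k] at h
    have habs : |a k + (k : ℝ) - b k| = b k - a k - (k : ℝ) := by
      rw [show a k + (k : ℝ) - b k = -(b k - a k - (k : ℝ)) by ring, abs_neg]
      exact abs_of_nonneg (by linarith [hba k])
    rwa [habs] at h
  -- Gromov product of y k with the anchor point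
  have gp1 : ∀ k : ℕ, (k : ℝ) - 3 * c₀ / 2 ≤ gromovProd x (y k) (xs (N k)) := by
    intro k
    have h1 := abs_le.1 (hd1 k)
    have h2 := abs_le.1 (hd2 k)
    have h3 := abs_le.1 (hd3 k)
    simp only [gromovProd]
    linarith [h1.1, h2.2, h3.1]
  -- and with any later point of the sequence
  have gp2 : ∀ k : ℕ, ∀ n ≥ N k, (k : ℝ) - 3 * c₀ / 2 - δ ≤ gromovProd x (y k) (xs n) := by
    intro k n hn
    have h := hXhyp x (y k) (xs (N k)) (xs n)
    have h2 := hN k (N k) le_rfl n hn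
    have hmin : (k : ℝ) - 3 * c₀ / 2 ≤
        min (gromovProd x (y k) (xs (N k))) (gromovProd x (xs (N k)) (xs n)) :=
      le_min (gp1 k) (by linarith)
    linarith
  have gsymm : ∀ u v : X, gromovProd x u v = gromovProd x v u := by
    intro u v
    simp only [gromovProd]
    rw [dist_comm u v]; ring
  -- Gromov products between the y's
  have gp3 : ∀ j k : ℕ, j ≤ k → (j : ℝ) - 3 * c₀ / 2 - 2 * δ ≤ gromovProd x (y j) (y k) := by
    intro j k hjk
    set n := max (N j) (N k) with hn
    have h1 := gp2 j n (le_max_left _ _)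
    have h2 := gp2 k n (le_max_right _ _)
    have h := hXhyp x (y j) (xs n) (y k)
    rw [gsymm (xs n) (y k)] at h
    have hjk' : (j : ℝ) ≤ (k : ℝ) := Nat.cast_le.2 hjk
    have hmin : (j : ℝ) - 3 * c₀ / 2 - δ ≤
        min (gromovProd x (y j) (xs n)) (gromovProd x (y k) (xs n)) :=
      le_min (by linarith) (by linarith)
    linarith
  -- distance estimates between the y's
  have hyy : ∀ j k : ℕ, j ≤ k → |dist (y j) (y k) - ((k : ℝ) - (j : ℝ))| ≤ 5 * c₀ + 4 * δ := by
    intro j k hjk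
    have h1 := abs_le.1 (hd1 j)
    have h2 := abs_le.1 (hd1 k)
    have h3 := gp3 j k hjk
    have hdg : dist (y j) (y k) =
        dist x (y j) + dist x (y k) - 2 * gromovProd x (y j) (y k) := by
      simp only [gromovProd]; ring
    have htri : dist x (y k) ≤ dist x (y j) + dist (y j) (y k) := dist_triangle _ _ _
    rw [abs_le]
    constructor
    · linarith [h1.2, h2.1]
    · linarith [h1.1, h1.2, h2.2]
  have hyy' : ∀ j k : ℕ, abs (dist (y j) (y k) - |(j : ℝ) - (k : ℝ)|) ≤ 5 * c₀ + 4 * δ := by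
    intro j k
    rcases le_total j k with h | h
    · have habs : |(j : ℝ) - (k : ℝ)| = (k : ℝ) - (j : ℝ) := by
        rw [abs_sub_comm]; exact abs_of_nonneg (sub_nonneg.2 (Nat.cast_le.2 h))
      rw [habs]; exact hyy j k h
    · have habs : |(j : ℝ) - (k : ℝ)| = (j : ℝ) - (k : ℝ) :=
        abs_of_nonneg (sub_nonneg.2 (Nat.cast_le.2 h))
      rw [habs, dist_comm]
      exact hyy k j h
  refine ⟨fun t => y ⌊t⌋₊, ?_, ?_, ?_⟩
  · -- γ 0 = x
    show y ⌊(0:ℝ)⌋₊ = x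
    rw [Nat.floor_zero]
    show γg 0 (a 0 + ((0:ℕ) : ℝ)) = x
    rw [Nat.cast_zero, add_zero]
    exact hγ0 0
  · -- rough geodesic property
    intro s t hs ht
    set j := ⌊s⌋₊ with hjdef
    set k := ⌊t⌋₊ with hkdef
    have hs1 : (j : ℝ) ≤ s := Nat.floor_le hs
    have hs2 : s < (j : ℝ) + 1 := Nat.lt_floor_add_one s
    have ht1 : (k : ℝ) ≤ t := Nat.floor_le ht
    have ht2 : t < (k : ℝ) + 1 := Nat.lt_floor_add_one t
    have key := hyy' j k
    have h5 : |((j : ℝ) - (k : ℝ)) - (s - t)| ≤ 2 := by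
      rw [abs_le]; constructor <;> linarith
    have h6 : abs (|(j : ℝ) - (k : ℝ)| - |s - t|) ≤ |((j : ℝ) - (k : ℝ)) - (s - t)| :=
      abs_abs_sub_abs_le_abs_sub _ _
    have h7 : abs (dist (y j) (y k) - |s - t|) ≤
        abs (dist (y j) (y k) - |(j : ℝ) - (k : ℝ)|) + abs (|(j : ℝ) - (k : ℝ)| - |s - t|) :=
      abs_sub_le _ _ _
    calc abs (dist (y j) (y k) - |s - t|) ≤ _ := h7
      _ ≤ 5 * c₀ + 4 * δ + 2 := by linarith
  · -- liminf condition
    intro M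
    refine ⟨M + 3 * c₀ / 2 + δ + 1, ?_⟩
    intro t ht
    set k := ⌊t⌋₊ with hkdef
    have ht2 : t < (k : ℝ) + 1 := Nat.lt_floor_add_one t
    have hk : M + 3 * c₀ / 2 + δ ≤ (k : ℝ) := by linarith
    have hbdd : IsBoundedUnder (· ≤ ·) atTop (fun n => gromovProd x (y k) (xs n)) := by
      refine isBoundedUnder_of ⟨dist x (y k), fun n => ?_⟩
      have := dist_triangle x (y k) (xs n)
      simp only [gromovProd]
      linarith [this]
    refine le_liminf_of_le hbdd.isCoboundedUnder_ge ?_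
    filter_upwards [eventually_ge_atTop (N k)] with n hn
    have := gp2 k n hn
    linarith
end

section
/- Let (X,d) be a c₀-roughly geodesic δ-hyperbolic metric space with basepoint o. There exists C ≥ 0 (depending only on δ and c₀) such that for any two Cauchy–Gromov sequences (xₙ), (yₙ) in X which are not equivalent (i.e. liminf_{n} (xₙ,yₙ)_o < ∞) there is a map γ : ℝ → X with |d(γ(s),γ(t)) − |s−t|| ≤ C for all s,t ∈ ℝ, with lim_{t→−∞} liminf_{n→∞} (γ(t),xₙ)_o = ∞ and lim_{t→+∞} liminf_{n→∞} (γ(t),yₙ)_o = ∞. -/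
open Filter

section helpers
variable {X : Type*} [MetricSpace X]

lemma gp_nonneg (o x y : X) : 0 ≤ gromovProd o x y := by
  have h := dist_triangle x o y
  rw [dist_comm x o] at h
  unfold gromovProd; linarith

lemma gp_comm (o x y : X) : gromovProd o x y = gromovProd o y x := by
  unfold gromovProd; rw [dist_comm x y]; ring

lemma gp_le (o x y : X) : gromovProd o x y ≤ dist o x := by
  have h := dist_triangle o x y
  unfold gromovProd; linarith

lemma gp_self (o z : X) : gromovProd o z z = dist o z := by
  unfold gromovProd; simp

lemma dist_eq_gp (o x y : X) : dist x y = dist o x + dist o y - 2 * gromovProd o x y := by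
  unfold gromovProd; ring

lemma same_side {δ c₀ : ℝ} (hδ : 0 ≤ δ) (hc₀ : 0 ≤ c₀) (hyp : HyperbolicWith X δ)
    (o u v z w : X) (σ τ : ℝ)
    (hu : |dist o u - σ| ≤ c₀) (hv : |dist o v - τ| ≤ c₀)
    (huz : σ - (3/2)*c₀ ≤ gromovProd o u z) (hvw : τ - (3/2)*c₀ ≤ gromovProd o v w)
    (hst : σ ≤ τ) (hp : σ ≤ gromovProd o z w) :
    |dist u v - (τ - σ)| ≤ 5*c₀ + 4*δ := by
  obtain ⟨hu1, hu2⟩ := abs_le.mp hu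
  obtain ⟨hv1, hv2⟩ := abs_le.mp hv
  have h1 := hyp o u z v
  have h2 := hyp o z w v
  have hwv : τ - (3/2)*c₀ ≤ gromovProd o w v := by rw [gp_comm]; exact hvw
  have hzv : σ - (3/2)*c₀ - δ ≤ gromovProd o z v := by
    rcases min_choice (gromovProd o z w) (gromovProd o w v) with h | h <;> rw [h] at h2 <;> linarith
  have huv : σ - (3/2)*c₀ - 2*δ ≤ gromovProd o u v := by
    rcases min_choice (gromovProd o u z) (gromovProd o z v) with h | h <;> rw [h] at h1 <;> linarith
  have hde := dist_eq_gp o u v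
  have htri := dist_triangle o u v
  rw [abs_le]; constructor <;> linarith

lemma cross_side {δ c₀ : ℝ} (hδ : 0 ≤ δ) (hc₀ : 0 ≤ c₀) (hyp : HyperbolicWith X δ)
    (o u v x y : X) (σ τ : ℝ)
    (hu : |dist o u - σ| ≤ c₀) (hv : |dist o v - τ| ≤ c₀)
    (hux : σ - (3/2)*c₀ ≤ gromovProd o u x) (hvy : τ - (3/2)*c₀ ≤ gromovProd o v y)
    (hσ : gromovProd o x y + 2*c₀ + 3*δ + 1 ≤ σ) (hτ : gromovProd o x y + 2*c₀ + 3*δ + 1 ≤ τ) :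
    |dist u v - (σ + τ - 2 * gromovProd o x y)| ≤ 2*c₀ + 4*δ := by
  obtain ⟨hu1, hu2⟩ := abs_le.mp hu
  obtain ⟨hv1, hv2⟩ := abs_le.mp hv
  have hxu : gromovProd o x u = gromovProd o u x := gp_comm o x u
  have hyv : gromovProd o y v = gromovProd o v y := gp_comm o y v
  have h1 := hyp o x u y
  have huy_le : gromovProd o u y ≤ gromovProd o x y + δ := by
    rcases min_choice (gromovProd o x u) (gromovProd o u y) with h | h <;> rw [h] at h1
    · rw [hxu] at h1; linarith
    · linarith
  have h2 := hyp o u v y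
  have huv_le : gromovProd o u v ≤ gromovProd o x y + 2*δ := by
    rcases min_choice (gromovProd o u v) (gromovProd o v y) with h | h <;> rw [h] at h2
    · linarith
    · linarith
  have h3 := hyp o u x v
  have h4 := hyp o x y v
  have hxv_ge : gromovProd o x y - δ ≤ gromovProd o x v := by
    rcases min_choice (gromovProd o x y) (gromovProd o y v) with h | h <;> rw [h] at h4
    · linarith
    · rw [hyv] at h4; linarith
  have huv_ge : gromovProd o x y - 2*δ ≤ gromovProd o u v := by
    rcases min_choice (gromovProd o u x) (gromovProd o x v) with h | h <;> rw [h] at h3 <;> linarith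
  have hde := dist_eq_gp o u v
  rw [abs_le]; constructor <;> linarith

lemma liminf_ge_of {u : ℕ → ℝ} {c D : ℝ} (hD : ∀ n, u n ≤ D) {N : ℕ} (h : ∀ n ≥ N, c ≤ u n) :
    c ≤ Filter.liminf u Filter.atTop := by
  rw [Filter.liminf_eq]
  apply le_csSup
  · refine ⟨D, ?_⟩
    rintro x hx
    simp only [Set.mem_setOf_eq] at hx
    obtain ⟨n, hn⟩ := hx.exists
    exact hn.trans (hD n)
  · simp only [Set.mem_setOf_eq]
    exact Filter.eventually_atTop.mpr ⟨N, h⟩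

end helpers

/-- In a roughly geodesic hyperbolic space, any two distinct boundary points
(represented by non-equivalent Cauchy–Gromov sequences) are joined by a two-sided
rough geodesic with uniform constant. -/
theorem exists_roughGeodesic_between_boundary_points
    {X : Type*} [MetricSpace X] (δ c₀ : ℝ) (hδ : 0 ≤ δ) (hc₀ : 0 ≤ c₀)
    (hXhyp : HyperbolicWith X δ) (hXrg : RoughlyGeodesicWith X c₀) (o : X) :
    ∃ C ≥ (0:ℝ), ∀ xs ys : ℕ → X, CauchyGromov o xs → CauchyGromov o ys →
      -- the two sequences are not equivalent: `liminf (xₙ,yₙ)_o < ∞`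
      (∃ B : ℝ, ∀ N : ℕ, ∃ n ≥ N, gromovProd o (xs n) (ys n) ≤ B) →
      ∃ γ : ℝ → X,
        (∀ s t : ℝ, abs (dist (γ s) (γ t) - |s - t|) ≤ C) ∧
        (∀ M : ℝ, ∃ T : ℝ, ∀ t ≤ T,
          M ≤ liminf (fun n => gromovProd o (γ t) (xs n)) atTop) ∧
        (∀ M : ℝ, ∃ T : ℝ, ∀ t ≥ T,
          M ≤ liminf (fun n => gromovProd o (γ t) (ys n)) atTop) := by
  classical
  choose a b hab g hg0 hg1 hgd using hXrg
  set K : ℝ := 2*c₀ + 3*δ + 1 with hKdef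
  have hK0 : 0 ≤ K := by simp only [hKdef]; linarith
  have hKc : c₀ ≤ K := by simp only [hKdef]; linarith
  -- geodesic point function
  set P : X → ℝ → X := fun z s => g o z (a o z + s) with hPdef
  -- length of a rough geodesic is at least the distance minus c₀
  have hba : ∀ z : X, dist o z - c₀ ≤ b o z - a o z := by
    intro z
    have h := hgd o z (a o z) ⟨le_refl _, hab o z⟩ (b o z) ⟨hab o z, le_refl _⟩
    rw [hg0, hg1] at h
    rw [show |a o z - b o z| = b o z - a o z by
      rw [abs_sub_comm, abs_of_nonneg (by linarith [hab o z])]] at h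
    have := abs_le.mp h
    linarith [this.2]
  -- basic properties of points on rough geodesics
  have hP : ∀ (z : X) (s : ℝ), 0 ≤ s → s ≤ b o z - a o z →
      |dist o (P z s) - s| ≤ c₀ ∧ s - (3/2)*c₀ ≤ gromovProd o (P z s) z := by
    intro z s hs0 hs1
    have hm : a o z + s ∈ Set.Icc (a o z) (b o z) := ⟨by linarith, by linarith⟩
    have h0 := hgd o z (a o z) ⟨le_refl _, hab o z⟩ (a o z + s) hm
    rw [hg0, show |a o z - (a o z + s)| = s by
      rw [show a o z - (a o z + s) = -s by ring, abs_neg, abs_of_nonneg hs0]] at h0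
    have h2 := hgd o z (a o z + s) hm (b o z) ⟨hab o z, le_refl _⟩
    rw [hg1, show |a o z + s - b o z| = b o z - a o z - s by
      rw [show a o z + s - b o z = -(b o z - a o z - s) by ring, abs_neg,
        abs_of_nonneg (by linarith)]] at h2
    have h3 := hgd o z (a o z) ⟨le_refl _, hab o z⟩ (b o z) ⟨hab o z, le_refl _⟩
    rw [hg0, hg1, show |a o z - b o z| = b o z - a o z by
      rw [abs_sub_comm, abs_of_nonneg (by linarith [hab o z])]] at h3
    have h0' := abs_le.mp h0
    have h2' := abs_le.mp h2
    have h3' := abs_le.mp h3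
    constructor
    · simp only [hPdef]; exact h0
    · simp only [hPdef]
      unfold gromovProd
      linarith [h0'.1, h0'.2, h2'.1, h2'.2, h3'.1, h3'.2]
  refine ⟨10*c₀ + 25*δ + 10, by linarith, ?_⟩
  intro xs ys hxCG hyCG hne
  choose Nx hNx using hxCG
  choose Ny hNy using hyCG
  obtain ⟨B, hB⟩ := hne
  set N₁ : ℕ := max (Nx (B+4*δ+1)) (Ny (B+4*δ+1)) with hN₁def
  obtain ⟨n₀, hn₀N, hn₀⟩ := hB N₁
  set r : ℝ := gromovProd o (xs n₀) (ys n₀) with hrdef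
  have hr0 : 0 ≤ r := gp_nonneg _ _ _
  have hrB : r ≤ B := hn₀
  have hNxN₁ : Nx (B+4*δ+1) ≤ N₁ := le_max_left _ _
  have hNyN₁ : Ny (B+4*δ+1) ≤ N₁ := le_max_right _ _
  -- stability of cross Gromov products
  have hcross : ∀ n m : ℕ, N₁ ≤ n → N₁ ≤ m →
      r - 2*δ ≤ gromovProd o (xs n) (ys m) ∧ gromovProd o (xs n) (ys m) ≤ r + 4*δ := by
    intro n m hn hm
    have hxx : B+4*δ+1 ≤ gromovProd o (xs n) (xs n₀) :=
      hNx _ n (hNxN₁.trans hn) n₀ (hNxN₁.trans hn₀N)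
    have hyy : B+4*δ+1 ≤ gromovProd o (ys n₀) (ys m) :=
      hNy _ n₀ (hNyN₁.trans hn₀N) m (hNyN₁.trans hm)
    constructor
    · have h1 := hXhyp o (xs n₀) (ys n₀) (ys m)
      have hA : r - δ ≤ gromovProd o (xs n₀) (ys m) := by
        rcases min_choice (gromovProd o (xs n₀) (ys n₀)) (gromovProd o (ys n₀) (ys m)) with h | h <;>
          rw [h] at h1 <;> [skip; skip] <;> first
          | (rw [← hrdef] at h1; linarith)
          | linarith
      have h2 := hXhyp o (xs n) (xs n₀) (ys m)
      rcases min_choice (gromovProd o (xs n) (xs n₀)) (gromovProd o (xs n₀) (ys m)) with h | h <;>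
        rw [h] at h2 <;> linarith
    · by_contra hcon
      push_neg at hcon
      have hyy2 : B+4*δ+1 ≤ gromovProd o (ys m) (ys n₀) := by rw [gp_comm]; exact hyy
      have h3 := hXhyp o (xs n) (ys m) (ys n₀)
      have hA : r + 3*δ < gromovProd o (xs n) (ys n₀) := by
        rcases min_choice (gromovProd o (xs n) (ys m)) (gromovProd o (ys m) (ys n₀)) with h | h <;>
          rw [h] at h3 <;> linarith
      have hxx2 : B+4*δ+1 ≤ gromovProd o (xs n₀) (xs n) := by rw [gp_comm]; exact hxx
      have h4 := hXhyp o (xs n₀) (xs n) (ys n₀)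
      rw [← hrdef] at h4
      rcases min_choice (gromovProd o (xs n₀) (xs n)) (gromovProd o (xs n) (ys n₀)) with h | h <;>
        rw [h] at h4 <;> linarith
  set R : ℝ := r + 4*δ + K with hRdef
  have hR0 : 0 ≤ R := by simp only [hRdef]; linarith
  -- monotone index function
  set Q : ℝ → ℕ := fun M => max (max (Nx M) (Ny M)) N₁ with hQdef
  set Mk : ℕ → ℕ := fun k => (Finset.range (k+1)).sup (fun j => Q (R + j + K)) with hMkdef
  have hMkmono : Monotone Mk := fun i j hij =>
    Finset.sup_mono (Finset.range_subset_range.mpr (by omega))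
  have hMkQ : ∀ k : ℕ, Q (R + k + K) ≤ Mk k := fun k =>
    Finset.le_sup (f := fun j : ℕ => Q (R + (j : ℝ) + K)) (Finset.self_mem_range_succ k)
  have hMkNx : ∀ k : ℕ, Nx (R + k + K) ≤ Mk k := fun k =>
    le_trans (le_trans (le_max_left _ _) (le_max_left _ _)) (hMkQ k)
  have hMkNy : ∀ k : ℕ, Ny (R + k + K) ≤ Mk k := fun k =>
    le_trans (le_trans (le_max_right _ _) (le_max_left _ _)) (hMkQ k)
  have hMkN₁ : ∀ k : ℕ, N₁ ≤ Mk k := fun k => le_trans (le_max_right _ _) (hMkQ k)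
  -- lower bounds on distances from o
  have hdx : ∀ (k : ℕ) (n : ℕ), Mk k ≤ n → R + k + K ≤ dist o (xs n) := by
    intro k n hn
    have := hNx (R + k + K) n ((hMkNx k).trans hn) n ((hMkNx k).trans hn)
    rwa [gp_self] at this
  have hdy : ∀ (k : ℕ) (n : ℕ), Mk k ≤ n → R + k + K ≤ dist o (ys n) := by
    intro k n hn
    have := hNy (R + k + K) n ((hMkNy k).trans hn) n ((hMkNy k).trans hn)
    rwa [gp_self] at this
  -- the rough geodesic line
  set γ : ℝ → X := fun t => if 0 ≤ t then P (ys (Mk ⌈t⌉₊)) (R + t) else P (xs (Mk ⌈-t⌉₊)) (R - t)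
    with hγdef
  -- facts about points of γ
  have hYfact : ∀ t : ℝ, 0 ≤ t →
      |dist o (P (ys (Mk ⌈t⌉₊)) (R + t)) - (R + t)| ≤ c₀ ∧
      (R + t) - (3/2)*c₀ ≤ gromovProd o (P (ys (Mk ⌈t⌉₊)) (R + t)) (ys (Mk ⌈t⌉₊)) := by
    intro t ht
    apply hP
    · linarith
    · have h1 := hdy ⌈t⌉₊ (Mk ⌈t⌉₊) (le_refl _)
      have h2 := hba (ys (Mk ⌈t⌉₊))
      have h3 : t ≤ (⌈t⌉₊ : ℝ) := Nat.le_ceil t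
      linarith
  have hXfact : ∀ t : ℝ, t < 0 →
      |dist o (P (xs (Mk ⌈-t⌉₊)) (R - t)) - (R - t)| ≤ c₀ ∧
      (R - t) - (3/2)*c₀ ≤ gromovProd o (P (xs (Mk ⌈-t⌉₊)) (R - t)) (xs (Mk ⌈-t⌉₊)) := by
    intro t ht
    apply hP
    · linarith
    · have h1 := hdx ⌈-t⌉₊ (Mk ⌈-t⌉₊) (le_refl _)
      have h2 := hba (xs (Mk ⌈-t⌉₊))
      have h3 : -t ≤ (⌈-t⌉₊ : ℝ) := Nat.le_ceil (-t)
      linarith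
  -- Gromov products between endpoints used at different parameters
  have hYprod : ∀ s t : ℝ, 0 ≤ s → s ≤ t →
      R + s ≤ gromovProd o (ys (Mk ⌈s⌉₊)) (ys (Mk ⌈t⌉₊)) := by
    intro s t hs hst
    have h2 : Mk ⌈s⌉₊ ≤ Mk ⌈t⌉₊ := hMkmono (Nat.ceil_le_ceil hst)
    have := hNy (R + ⌈s⌉₊ + K) (Mk ⌈s⌉₊) (hMkNy _) (Mk ⌈t⌉₊) ((hMkNy _).trans h2)
    have hcs : s ≤ (⌈s⌉₊ : ℝ) := Nat.le_ceil s
    linarith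
  have hXprod : ∀ s t : ℝ, 0 ≤ s → s ≤ t →
      R + s ≤ gromovProd o (xs (Mk ⌈s⌉₊)) (xs (Mk ⌈t⌉₊)) := by
    intro s t hs hst
    have h2 : Mk ⌈s⌉₊ ≤ Mk ⌈t⌉₊ := hMkmono (Nat.ceil_le_ceil hst)
    have := hNx (R + ⌈s⌉₊ + K) (Mk ⌈s⌉₊) (hMkNx _) (Mk ⌈t⌉₊) ((hMkNx _).trans h2)
    have hcs : s ≤ (⌈s⌉₊ : ℝ) := Nat.le_ceil s
    linarith
  -- main rough geodesic estimate, for s ≤ t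
  have hmain : ∀ s t : ℝ, s ≤ t → abs (dist (γ s) (γ t) - |s - t|) ≤ 10*c₀ + 25*δ + 10 := by
    intro s t hst
    have habs : |s - t| = t - s := by
      rw [abs_sub_comm]; exact abs_of_nonneg (by linarith)
    rcases le_or_gt 0 s with hs | hs
    · -- both on the y-side
      have ht : 0 ≤ t := hs.trans hst
      have hγs : γ s = P (ys (Mk ⌈s⌉₊)) (R + s) := by simp only [hγdef, if_pos hs]
      have hγt : γ t = P (ys (Mk ⌈t⌉₊)) (R + t) := by simp only [hγdef, if_pos ht]
      obtain ⟨hu1, hu2⟩ := hYfact s hs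
      obtain ⟨hv1, hv2⟩ := hYfact t ht
      have hss := same_side hδ hc₀ hXhyp o (P (ys (Mk ⌈s⌉₊)) (R + s)) (P (ys (Mk ⌈t⌉₊)) (R + t))
        (ys (Mk ⌈s⌉₊)) (ys (Mk ⌈t⌉₊)) (R + s) (R + t) hu1 hv1 hu2 hv2 (by linarith)
        (hYprod s t hs hst)
      rw [hγs, hγt, habs]
      rw [show (R + t) - (R + s) = t - s by ring] at hss
      have := abs_le.mp hss
      rw [abs_le]
      constructor <;> linarith [this.1, this.2]
    · rcases lt_or_ge t 0 with ht | ht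
      · -- both on the x-side
        have hγs : γ s = P (xs (Mk ⌈-s⌉₊)) (R - s) := by simp only [hγdef, if_neg (not_le.mpr hs)]
        have hγt : γ t = P (xs (Mk ⌈-t⌉₊)) (R - t) := by simp only [hγdef, if_neg (not_le.mpr ht)]
        obtain ⟨hu1, hu2⟩ := hXfact t ht
        obtain ⟨hv1, hv2⟩ := hXfact s hs
        have hss := same_side hδ hc₀ hXhyp o (P (xs (Mk ⌈-t⌉₊)) (R - t)) (P (xs (Mk ⌈-s⌉₊)) (R - s))
          (xs (Mk ⌈-t⌉₊)) (xs (Mk ⌈-s⌉₊)) (R - t) (R - s) hu1 hv1 hu2 hv2 (by linarith)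
          (by
            have := hXprod (-t) (-s) (by linarith) (by linarith)
            rw [show R + -t = R - t by ring] at this
            exact this)
        rw [hγs, hγt, habs, dist_comm]
        rw [show (R - s) - (R - t) = t - s by ring] at hss
        have := abs_le.mp hss
        rw [abs_le]
        constructor <;> linarith [this.1, this.2]
      · -- cross: s < 0 ≤ t
        have hγs : γ s = P (xs (Mk ⌈-s⌉₊)) (R - s) := by simp only [hγdef, if_neg (not_le.mpr hs)]
        have hγt : γ t = P (ys (Mk ⌈t⌉₊)) (R + t) := by simp only [hγdef, if_pos ht]
        obtain ⟨hu1, hu2⟩ := hXfact s hs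
        obtain ⟨hv1, hv2⟩ := hYfact t ht
        obtain ⟨hcl, hcr⟩ := hcross (Mk ⌈-s⌉₊) (Mk ⌈t⌉₊) (hMkN₁ _) (hMkN₁ _)
        have hcs := cross_side hδ hc₀ hXhyp o (P (xs (Mk ⌈-s⌉₊)) (R - s)) (P (ys (Mk ⌈t⌉₊)) (R + t))
          (xs (Mk ⌈-s⌉₊)) (ys (Mk ⌈t⌉₊)) (R - s) (R + t) hu1 hv1 hu2 hv2
          (by simp only [hRdef, hKdef] at *; linarith)
          (by simp only [hRdef, hKdef] at *; linarith)
        rw [hγs, hγt, habs]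
        have h1 := abs_le.mp hcs
        have hRr1 : R - gromovProd o (xs (Mk ⌈-s⌉₊)) (ys (Mk ⌈t⌉₊)) ≤ K + 6*δ := by
          simp only [hRdef]; linarith
        have hRr2 : K ≤ R - gromovProd o (xs (Mk ⌈-s⌉₊)) (ys (Mk ⌈t⌉₊)) := by
          simp only [hRdef]; linarith
        rw [abs_le]
        constructor <;>
          [ (have := h1.1); (have := h1.2) ] <;>
          simp only [hKdef] at hRr1 hRr2 <;> linarith
  refine ⟨γ, ?_, ?_, ?_⟩
  · intro s t
    rcases le_total s t with h | h
    · exact hmain s t h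
    · rw [dist_comm, abs_sub_comm s t]; exact hmain t s h
  · -- xs endpoint
    intro M
    refine ⟨-(max M 0) - 1, ?_⟩
    intro t ht
    have ht0 : t < 0 := by
      have := le_max_right M 0
      linarith
    have hmt : max M 0 + 1 ≤ -t := by linarith
    have hγt : γ t = P (xs (Mk ⌈-t⌉₊)) (R - t) := by simp only [hγdef, if_neg (not_le.mpr ht0)]
    obtain ⟨hu1, hu2⟩ := hXfact t ht0
    apply liminf_ge_of (fun n => gp_le o (γ t) (xs n)) (N := Mk ⌈-t⌉₊)
    intro n hn
    have hprod : R + ⌈-t⌉₊ + K ≤ gromovProd o (xs (Mk ⌈-t⌉₊)) (xs n) :=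
      hNx _ _ (hMkNx _) _ ((hMkNx _).trans hn)
    have h1 := hXhyp o (γ t) (xs (Mk ⌈-t⌉₊)) (xs n)
    rw [hγt]
    rw [hγt] at h1
    have hct : -t ≤ (⌈-t⌉₊ : ℝ) := Nat.le_ceil (-t)
    have hMle : M ≤ max M 0 := le_max_left M 0
    rcases min_choice (gromovProd o (P (xs (Mk ⌈-t⌉₊)) (R - t)) (xs (Mk ⌈-t⌉₊)))
        (gromovProd o (xs (Mk ⌈-t⌉₊)) (xs n)) with h | h <;> rw [h] at h1 <;>
      simp only [hRdef, hKdef] at * <;> linarith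
  · -- ys endpoint
    intro M
    refine ⟨max M 0, ?_⟩
    intro t ht
    have ht0 : 0 ≤ t := le_trans (le_max_right M 0) ht
    have hMt : M ≤ t := le_trans (le_max_left M 0) ht
    have hγt : γ t = P (ys (Mk ⌈t⌉₊)) (R + t) := by simp only [hγdef, if_pos ht0]
    obtain ⟨hu1, hu2⟩ := hYfact t ht0
    apply liminf_ge_of (fun n => gp_le o (γ t) (ys n)) (N := Mk ⌈t⌉₊)
    intro n hn
    have hprod : R + ⌈t⌉₊ + K ≤ gromovProd o (ys (Mk ⌈t⌉₊)) (ys n) :=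
      hNy _ _ (hMkNy _) _ ((hMkNy _).trans hn)
    have h1 := hXhyp o (γ t) (ys (Mk ⌈t⌉₊)) (ys n)
    rw [hγt]
    rw [hγt] at h1
    have hct : t ≤ (⌈t⌉₊ : ℝ) := Nat.le_ceil t
    rcases min_choice (gromovProd o (P (ys (Mk ⌈t⌉₊)) (R + t)) (ys (Mk ⌈t⌉₊)))
        (gromovProd o (ys (Mk ⌈t⌉₊)) (ys n)) with h | h <;> rw [h] at h1 <;>
      simp only [hRdef, hKdef] at * <;> linarith
end
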